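/- With ν as the full sum and ν_N(x) = ∑_{q=2}^N ∑_{1≤p<q, gcd(p,q)=1} (q/(2^q-1)) 1_{J_{p/q}}(x) the N-th partial sum, for every integer N ≥ 2 and every x ∈ [-1/2, 1/2] we have 0 ≤ ν(x) - ν_N(x) < 4(N+2)/(2^{N+1} - 1). -/

import Mathlib

noncomputable def tpq (p q : ℕ) : ℝ :=
  ∑ i ∈ Finset.Icc 1 q,
    ((⌊(((i + 1) * p : ℕ) : ℝ) / q⌋ - ⌊((i * p : ℕ) : ℝ) / q⌋ : ℤ) : ℝ) / 2 ^ i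

lemma tpq_nonneg (p q : ℕ) : 0 ≤ tpq p q := by
  apply Finset.sum_nonneg
  intro i hi
  apply div_nonneg _ (by positivity)
  have h : ⌊((i * p : ℕ) : ℝ) / q⌋ ≤ ⌊(((i + 1) * p : ℕ) : ℝ) / q⌋ := by
    apply Int.floor_le_floor
    gcongr <;> first
      | positivity
      | omega
  exact_mod_cast sub_nonneg.mpr h

lemma geom_sum_lt_one (q : ℕ) : ∑ i ∈ Finset.Icc 1 q, (1:ℝ)/2^i < 1 := by
  have h : ∀ q : ℕ, ∑ i ∈ Finset.Icc 1 q, (1:ℝ)/2^i = 1 - 1/2^q := by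
    intro q
    induction q with
    | zero => simp
    | succ n ih =>
      rw [Finset.sum_Icc_succ_top (by omega), ih]
      ring
  rw [h]
  have : (0:ℝ) < 1/2^q := by positivity
  linarith

lemma tpq_lt_one (p q : ℕ) (hp : p < q) : tpq p q < 1 := by
  have hq : 0 < q := lt_of_le_of_lt (Nat.zero_le p) hp
  have hqr : (0:ℝ) < q := by exact_mod_cast hq
  calc tpq p q ≤ ∑ i ∈ Finset.Icc 1 q, (1:ℝ)/2^i := by
        apply Finset.sum_le_sum
        intro i hi
        have h2 : (0:ℝ) < 2^i := by positivity
        gcongr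
        have hA : (((i + 1) * p : ℕ) : ℝ) / q < (⌊((i * p : ℕ) : ℝ) / q⌋ : ℤ) + 2 := by
          have h1 : ((i * p : ℕ) : ℝ) / q < ⌊((i * p : ℕ) : ℝ) / q⌋ + 1 := Int.lt_floor_add_one _
          have h2 : ((i + 1) * p : ℕ) = (i * p) + p := by ring
          have h3 : (p : ℝ) / q < 1 := by
            rw [div_lt_one hqr]; exact_mod_cast hp
          rw [h2]
          push_cast
          rw [add_div]
          push_cast at h1
          linarith
        have := (Int.floor_lt).mpr (by exact_mod_cast hA)
        have : ⌊(((i + 1) * p : ℕ) : ℝ) / q⌋ ≤ ⌊((i * p : ℕ) : ℝ) / q⌋ + 1 := by omega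
        exact_mod_cast sub_le_iff_le_add'.mpr (by exact_mod_cast this)
    _ < 1 := geom_sum_lt_one q

noncomputable def Jpq (p q : ℕ) : Set ℝ :=
  Set.Icc (((p : ℝ) - tpq p q) / q - 1 / 2) (((p : ℝ) - tpq p q + 1) / q - 1 / 2)

noncomputable def nuTerm (q : ℕ) (x : ℝ) : ℝ :=
  ∑ p ∈ (Finset.Ioo 0 q).filter (fun p => Nat.Coprime p q),
    (q : ℝ) / (2 ^ q - 1) * (Jpq p q).indicator 1 x

noncomputable def nu (x : ℝ) : ℝ := ∑' q : ℕ, nuTerm q x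

noncomputable def nuN (N : ℕ) (x : ℝ) : ℝ := ∑ q ∈ Finset.Icc 2 N, nuTerm q x

open Classical in
lemma card_le_two (q : ℕ) (x : ℝ) :
    ((((Finset.Ioo 0 q).filter (fun p => Nat.Coprime p q)).filter
      (fun p => x ∈ Jpq p q)).card : ℕ) ≤ 2 := by
  set y : ℝ := (q : ℝ) * (x + 1/2) with hy
  have h2 : (Finset.Icc (⌈y⌉ - 1) ⌈y⌉).card = 2 := by
    rw [Int.card_Icc]; simp
  calc _ ≤ (Finset.Icc (⌈y⌉ - 1) ⌈y⌉).card := by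
        refine Finset.card_le_card_of_injOn (fun p => (p : ℤ)) ?_ ?_
        · intro p hp
          simp only [Finset.mem_coe, Finset.mem_filter, Finset.mem_Ioo] at hp
          obtain ⟨⟨⟨hp0, hpq⟩, -⟩, hmem⟩ := hp
          have hqr : (0:ℝ) < q := by exact_mod_cast Nat.pos_of_ne_zero (by omega)
          have ht0 := tpq_nonneg p q
          have ht1 := tpq_lt_one p q hpq
          rw [Jpq, Set.mem_Icc] at hmem
          obtain ⟨h1, h2'⟩ := hmem
          have hple : (p : ℝ) < y + 1 := by
            have ha : ((p:ℝ) - tpq p q) / q ≤ x + 1/2 := by linarith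
            have hb := (div_le_iff₀ hqr).mp ha
            rw [hy]; nlinarith
          have hpge : y - 1 ≤ (p : ℝ) := by
            have ha : x + 1/2 ≤ ((p:ℝ) - tpq p q + 1) / q := by linarith
            have hb := (le_div_iff₀ hqr).mp ha
            rw [hy]; nlinarith
          show (p:ℤ) ∈ Finset.Icc (⌈y⌉ - 1) ⌈y⌉
          rw [Finset.mem_Icc]
          constructor
          · have : (⌈y⌉ : ℝ) < y + 1 := Int.ceil_lt_add_one y
            have h3 : (⌈y⌉ : ℝ) - 2 < (p : ℝ) := by linarith
            have : ⌈y⌉ - 2 < (p : ℤ) := by exact_mod_cast h3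
            omega
          · have : ((p:ℤ) - 1 : ℤ) < ⌈y⌉ := Int.lt_ceil.mpr (by push_cast; linarith)
            omega
        · intro a _ b _ hab
          exact Nat.cast_injective hab
    _ = 2 := h2

open Classical in
lemma nuTerm_eq (q : ℕ) (x : ℝ) :
    nuTerm q x = (q : ℝ) / (2 ^ q - 1) *
      ((((Finset.Ioo 0 q).filter (fun p => Nat.Coprime p q)).filter
        (fun p => x ∈ Jpq p q)).card : ℕ) := by
  rw [nuTerm, ← Finset.mul_sum]
  congr 1
  rw [← Finset.sum_boole]
  apply Finset.sum_congr rfl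
  intro p _
  simp [Set.indicator_apply]

lemma nuTerm_nonneg (q : ℕ) (x : ℝ) : 0 ≤ nuTerm q x := by
  classical
  rw [nuTerm_eq]
  apply mul_nonneg _ (Nat.cast_nonneg _)
  apply div_nonneg (Nat.cast_nonneg _)
  have : (1:ℝ) ≤ 2 ^ q := one_le_pow₀ (by norm_num : (1:ℝ) ≤ 2)
  linarith

lemma nuTerm_le (q : ℕ) (x : ℝ) : nuTerm q x ≤ 2 * q / (2 ^ q - 1) := by
  classical
  rw [nuTerm_eq]
  have hc : (0:ℝ) ≤ (q : ℝ) / (2 ^ q - 1) := by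
    apply div_nonneg (Nat.cast_nonneg _)
    have : (1:ℝ) ≤ 2 ^ q := one_le_pow₀ (by norm_num : (1:ℝ) ≤ 2)
    linarith
  calc (q : ℝ) / (2 ^ q - 1) * _ ≤ (q : ℝ) / (2 ^ q - 1) * 2 := by
        apply mul_le_mul_of_nonneg_left _ hc
        exact_mod_cast card_le_two q x
    _ = 2 * q / (2 ^ q - 1) := by ring

lemma g_le (q : ℕ) (hq : 1 ≤ q) : 2 * (q:ℝ) / (2 ^ q - 1) ≤ 4 * q * (1/2) ^ q := by
  have hP : (2:ℝ) ≤ 2 ^ q := by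
    calc (2:ℝ) = 2^1 := by norm_num
    _ ≤ 2^q := by apply pow_le_pow_right₀ (by norm_num) hq
  have hP1 : (0:ℝ) < 2 ^ q - 1 := by linarith
  have hP0 : (0:ℝ) < 2 ^ q := by positivity
  rw [div_le_iff₀ hP1]
  have h12 : ((1:ℝ)/2) ^ q = 1 / 2 ^ q := by rw [div_pow, one_pow]
  rw [h12]
  have hq1 : (1:ℝ) ≤ (q:ℝ) := by exact_mod_cast hq
  have key : 4 * (q:ℝ) * (1 / 2 ^ q) * (2 ^ q - 1) = 4 * q - 4 * q / 2^q := by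
    field_simp
  rw [key]
  have : 4 * (q:ℝ) / 2^q ≤ 2 * q := by
    rw [div_le_iff₀ hP0]
    nlinarith
  linarith

lemma summable_nuTerm (x : ℝ) : Summable (fun q => nuTerm q x) := by
  refine Summable.of_nonneg_of_le (fun q => nuTerm_nonneg q x) ?_
    (?_ : Summable fun (q : ℕ) => 4 * (q:ℝ) * (1/2) ^ q)
  · intro q
    rcases Nat.eq_zero_or_pos q with h | h
    · subst h
      simp [nuTerm]
    · exact le_trans (nuTerm_le q x) (g_le q h)
  · have := summable_pow_mul_geometric_of_norm_lt_one (R := ℝ) 1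
      (r := 1/2) (by rw [Real.norm_eq_abs]; rw [abs_of_pos] <;> norm_num)
    have h2 := this.mul_left 4
    apply h2.congr
    intro n
    push_cast
    ring

lemma nuTerm_zero (q : ℕ) (x : ℝ) (hq : q ≤ 1) : nuTerm q x = 0 := by
  have h : Finset.Ioo 0 q = ∅ := by
    ext p; simp only [Finset.mem_Ioo, Finset.notMem_empty, iff_false]; omega
  simp [nuTerm, h]

theorem stmt_17 (N : ℕ) (hN : 2 ≤ N) (x : ℝ) (hx : x ∈ Set.Icc (-(1 / 2) : ℝ) (1 / 2)) :
    0 ≤ nu x - nuN N x ∧ nu x - nuN N x < 4 * (N + 2) / (2 ^ (N + 1) - 1) := by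
  have hsum := summable_nuTerm x
  have hkey : nu x - nuN N x = ∑' i : ℕ, nuTerm (i + (N + 1)) x := by
    have h1 := Summable.sum_add_tsum_nat_add (N + 1) hsum
    have h2 : ∑ i ∈ Finset.range (N + 1), nuTerm i x = nuN N x := by
      rw [nuN]
      apply (Finset.sum_subset ?_ ?_).symm
      · intro q hq
        simp only [Finset.mem_Icc] at hq
        simp only [Finset.mem_range]; omega
      · intro q hq hq2
        simp only [Finset.mem_range] at hq
        simp only [Finset.mem_Icc, not_and, not_le] at hq2
        apply nuTerm_zero
        by_contra h
        push_neg at h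
        exact absurd (hq2 (by omega)) (by omega)
    rw [nu, ← h1, h2]
    ring
  set D : ℝ := 2 ^ (N + 1) - 1 with hDdef
  have hD : (0:ℝ) < D := by
    have : (2:ℝ) ≤ 2 ^ (N+1) := by
      calc (2:ℝ) = 2^1 := by norm_num
      _ ≤ 2^(N+1) := by apply pow_le_pow_right₀ (by norm_num) (by omega)
    rw [hDdef]; linarith
  constructor
  · rw [hkey]
    exact tsum_nonneg (fun i => nuTerm_nonneg _ x)
  · rw [hkey]
    set h : ℕ → ℝ := fun i => 2 * ((i:ℝ) + N + 1) * (1/2) ^ i / D with hhdef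
    have hr : ‖(1/2 : ℝ)‖ < 1 := by rw [Real.norm_eq_abs, abs_of_pos] <;> norm_num
    have hs1 : Summable (fun i : ℕ => (i:ℝ) * (1/2) ^ i) := by
      have := summable_pow_mul_geometric_of_norm_lt_one (R := ℝ) 1 hr
      apply this.congr; intro n; rw [pow_one]
    have hs2 : Summable (fun i : ℕ => ((1/2):ℝ) ^ i) :=
      summable_geometric_of_lt_one (by norm_num) (by norm_num)
    have hfun : h = fun i : ℕ =>
        (2 * ((i:ℝ) * (1/2) ^ i) + (2 * (N:ℝ) + 2) * ((1/2) ^ i)) / D := by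
      funext i; rw [hhdef]; ring
    have hsh : Summable h := by
      rw [hfun]
      exact ((hs1.mul_left 2).add (hs2.mul_left _)).div_const D
    have hpow : ∀ i : ℕ, ((1:ℝ)/2) ^ i = 1 / 2 ^ i := by
      intro i; rw [div_pow, one_pow]
    have hle : ∀ i : ℕ, nuTerm (i + (N + 1)) x ≤ h i := by
      intro i
      refine le_trans (nuTerm_le _ x) ?_
      have h2i : (1:ℝ) ≤ 2 ^ i := one_le_pow₀ (by norm_num)
      have hden : 2 ^ i * D ≤ 2 ^ (i + (N+1)) - 1 := by
        have hN1 : (1:ℝ) ≤ 2 ^ N := one_le_pow₀ (by norm_num)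
        rw [hDdef, pow_add (2:ℝ) i (N+1), pow_add (2:ℝ) N 1]
        nlinarith
      have hdenpos : (0:ℝ) < 2 ^ i * D := by positivity
      have hstep : 2 * ((i + (N+1) : ℕ) : ℝ) / (2 ^ (i + (N+1)) - 1) ≤
          2 * ((i:ℝ) + N + 1) / (2 ^ i * D) := by
        have hnum : (0:ℝ) ≤ 2 * ((i + (N+1) : ℕ) : ℝ) := by positivity
        have := div_le_div_of_nonneg_left hnum hdenpos hden
        refine this.trans_eq ?_
        push_cast; ring
      refine le_trans hstep (le_of_eq ?_)
      show 2 * ((i:ℝ) + N + 1) / (2 ^ i * D) = 2 * ((i:ℝ) + N + 1) * (1/2) ^ i / D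
      rw [hpow i]
      field_simp
    have hstrict : nuTerm (1 + (N + 1)) x < h 1 := by
      refine lt_of_le_of_lt (nuTerm_le _ x) ?_
      have hval : h 1 = 2 * ((N:ℝ) + 2) / (2 * D) := by
        show 2 * (((1:ℕ):ℝ) + N + 1) * (1/2) ^ (1:ℕ) / D = 2 * ((N:ℝ) + 2) / (2 * D)
        rw [pow_one]
        push_cast
        field_simp
        ring
      rw [hval]
      have hnum : (0:ℝ) < 2 * ((N:ℝ) + 2) := by positivity
      have hbd : 2 * D < 2 ^ (1 + (N+1)) - 1 := by
        rw [hDdef]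
        have : (2:ℝ) ^ (1 + (N+1)) = 2 * 2 ^ (N+1) := by rw [pow_add]; ring
        rw [this]; linarith
      have := div_lt_div_of_pos_left hnum (by linarith : (0:ℝ) < 2 * D) hbd
      refine lt_of_le_of_lt (le_of_eq ?_) this
      push_cast; ring_nf
    have htsum : ∑' i, h i = 4 * ((N:ℝ) + 2) / D := by
      rw [hfun, tsum_div_const, Summable.tsum_add (hs1.mul_left 2) (hs2.mul_left _),
        tsum_mul_left, tsum_mul_left]
      have e1 : ∑' i : ℕ, (i:ℝ) * (1/2) ^ i = 2 := by
        rw [tsum_coe_mul_geometric_of_norm_lt_one hr]; norm_num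
      have e2 : ∑' i : ℕ, ((1/2):ℝ) ^ i = 2 := by
        rw [tsum_geometric_of_lt_one (by norm_num) (by norm_num)]; norm_num
      rw [e1, e2]; ring
    calc ∑' i : ℕ, nuTerm (i + (N + 1)) x < ∑' i, h i :=
          Summable.tsum_lt_tsum_of_nonneg (fun b => nuTerm_nonneg _ x) hle hstrict hsh
      _ = 4 * ((N:ℝ) + 2) / D := htsum
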